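/- Let n ≥ 1 and Q ≥ 2. Let A = (a₁,…,a_{Q−1}) and B = (b₁,…,b_{Q−1}) be (Q−1)-tuples of points of ℝⁿ, and let A₀, B₀ ∈ (ℝⁿ)^Q be the Q-tuples obtained from A and B by appending the point 0. Then 𝒢(A₀, B₀) ≤ 𝒢(A, B) ≤ √2 · 𝒢(A₀, B₀). -/

import Mathlib

/-- The metric `𝒢` on unordered `Q`-tuples of points of `ℝⁿ`: the minimum over permutations
`σ` of `(Σᵢ ‖Pᵢ − R_{σ(i)}‖²)^{1/2}`. -/
noncomputable def Gdist {n Q : ℕ} (P R : Fin Q → EuclideanSpace ℝ (Fin n)) : ℝ :=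
  ⨅ σ : Equiv.Perm (Fin Q), Real.sqrt (∑ i, ‖P i - R (σ i)‖ ^ 2)

/-- Extend a permutation of `Fin m` to `Fin (m+1)` fixing the last element. -/
def extLast {m : ℕ} (σ : Equiv.Perm (Fin m)) : Equiv.Perm (Fin (m + 1)) where
  toFun := Fin.snoc (fun i => (σ i).castSucc) (Fin.last m)
  invFun := Fin.snoc (fun i => (σ⁻¹ i).castSucc) (Fin.last m)
  left_inv x := by
    cases x using Fin.lastCases <;> simp
  right_inv x := by
    cases x using Fin.lastCases <;> simp

@[simp] lemma extLast_castSucc {m : ℕ} (σ : Equiv.Perm (Fin m)) (i : Fin m) :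
    extLast σ i.castSucc = (σ i).castSucc := by
  simp [extLast]

@[simp] lemma extLast_last {m : ℕ} (σ : Equiv.Perm (Fin m)) :
    extLast σ (Fin.last m) = Fin.last m := by
  simp [extLast]

lemma ne_last_of_castSucc {m : ℕ} (τ : Equiv.Perm (Fin (m + 1)))
    (h : τ (Fin.last m) = Fin.last m) (i : Fin m) : τ i.castSucc ≠ Fin.last m := by
  intro he
  exact (Fin.castSucc_lt_last i).ne (τ.injective (he.trans h.symm))

lemma inv_fix_last {m : ℕ} (τ : Equiv.Perm (Fin (m + 1))) (h : τ (Fin.last m) = Fin.last m) :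
    τ⁻¹ (Fin.last m) = Fin.last m := by
  conv_lhs => rw [← h]
  exact τ.symm_apply_apply _

/-- Restrict a permutation of `Fin (m+1)` fixing the last element to `Fin m`. -/
def restrictLast {m : ℕ} (τ : Equiv.Perm (Fin (m + 1))) (h : τ (Fin.last m) = Fin.last m) :
    Equiv.Perm (Fin m) where
  toFun i := (τ i.castSucc).castPred (ne_last_of_castSucc τ h i)
  invFun i := (τ⁻¹ i.castSucc).castPred (ne_last_of_castSucc τ⁻¹ (inv_fix_last τ h) i)
  left_inv i := by
    apply Fin.castSucc_injective
    rw [Fin.castSucc_castPred, Fin.castSucc_castPred]; exact τ.symm_apply_apply _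
  right_inv i := by
    apply Fin.castSucc_injective
    rw [Fin.castSucc_castPred, Fin.castSucc_castPred]; exact τ.apply_symm_apply _

lemma castSucc_restrictLast {m : ℕ} (τ : Equiv.Perm (Fin (m + 1)))
    (h : τ (Fin.last m) = Fin.last m) (i : Fin m) :
    Fin.castSucc (restrictLast τ h i) = τ i.castSucc :=
  Fin.castSucc_castPred _ (ne_last_of_castSucc τ h i)

lemma sum_restrict_eq {n m : ℕ} (A B : Fin m → EuclideanSpace ℝ (Fin n))
    (τ : Equiv.Perm (Fin (m + 1))) (h : τ (Fin.last m) = Fin.last m) :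
    (∑ i : Fin m, ‖A i - B (restrictLast τ h i)‖ ^ 2) =
      ∑ i : Fin (m + 1), ‖(Fin.snoc A 0 : Fin (m + 1) → EuclideanSpace ℝ (Fin n)) i -
        (Fin.snoc B 0 : Fin (m + 1) → EuclideanSpace ℝ (Fin n)) (τ i)‖ ^ 2 := by
  rw [Fin.sum_univ_castSucc]
  have hlast : ‖(Fin.snoc A 0 : Fin (m + 1) → EuclideanSpace ℝ (Fin n)) (Fin.last m) -
      (Fin.snoc B 0 : Fin (m + 1) → EuclideanSpace ℝ (Fin n)) (τ (Fin.last m))‖ ^ 2 = 0 := by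
    rw [h]; simp
  rw [hlast, add_zero]
  apply Finset.sum_congr rfl
  intro i _
  have hB : (Fin.snoc B 0 : Fin (m + 1) → EuclideanSpace ℝ (Fin n)) (τ i.castSucc) = B (restrictLast τ h i) := by
    rw [← castSucc_restrictLast τ h i, Fin.snoc_castSucc]
  rw [Fin.snoc_castSucc, hB]

lemma restrictLast_extLast {m : ℕ} (σ : Equiv.Perm (Fin m)) :
    restrictLast (extLast σ) (extLast_last σ) = σ := by
  refine Equiv.ext fun i => Fin.castSucc_injective _ ?_
  rw [castSucc_restrictLast, extLast_castSucc]

lemma gdist_aux {n m : ℕ} (A B : Fin m → EuclideanSpace ℝ (Fin n)) :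
    Gdist (Fin.snoc A 0) (Fin.snoc B 0) ≤ Gdist A B ∧
      Gdist A B ≤ Real.sqrt 2 * Gdist (Fin.snoc A 0) (Fin.snoc B 0) := by
  set A₀ : Fin (m + 1) → EuclideanSpace ℝ (Fin n) := Fin.snoc A 0 with hA₀
  set B₀ : Fin (m + 1) → EuclideanSpace ℝ (Fin n) := Fin.snoc B 0 with hB₀
  have hbdd1 : BddBelow (Set.range fun σ : Equiv.Perm (Fin (m + 1)) =>
      Real.sqrt (∑ i, ‖A₀ i - B₀ (σ i)‖ ^ 2)) := by
    refine ⟨0, ?_⟩; rintro x ⟨σ, rfl⟩; exact Real.sqrt_nonneg _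
  have hbdd2 : BddBelow (Set.range fun σ : Equiv.Perm (Fin m) =>
      Real.sqrt (∑ i, ‖A i - B (σ i)‖ ^ 2)) := by
    refine ⟨0, ?_⟩; rintro x ⟨σ, rfl⟩; exact Real.sqrt_nonneg _
  constructor
  · -- Gdist A₀ B₀ ≤ Gdist A B
    apply le_ciInf
    intro σ
    have h1 : Gdist A₀ B₀ ≤ Real.sqrt (∑ i, ‖A₀ i - B₀ (extLast σ i)‖ ^ 2) :=
      ciInf_le hbdd1 (extLast σ)
    have h2 : (∑ i, ‖A i - B (σ i)‖ ^ 2) = ∑ i, ‖A₀ i - B₀ (extLast σ i)‖ ^ 2 := by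
      have := sum_restrict_eq A B (extLast σ) (extLast_last σ)
      rwa [restrictLast_extLast] at this
    rw [h2]
    exact h1
  · -- Gdist A B ≤ √2 * Gdist A₀ B₀
    have h2pos : (0 : ℝ) < Real.sqrt 2 := Real.sqrt_pos.mpr (by norm_num)
    rw [← div_le_iff₀' h2pos]
    apply le_ciInf
    intro σ'
    rw [div_le_iff₀' h2pos]
    set k := σ' (Fin.last m) with hk
    set τ := Equiv.swap k (Fin.last m) * σ' with hτ
    have hτlast : τ (Fin.last m) = Fin.last m := by
      simp [hτ, hk, Equiv.swap_apply_left]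
    set σ := restrictLast τ hτlast with hσ
    have hkey : (∑ i, ‖A₀ i - B₀ (τ i)‖ ^ 2) ≤ 2 * ∑ i, ‖A₀ i - B₀ (σ' i)‖ ^ 2 := by
      set j := σ'⁻¹ (Fin.last m) with hj
      have hσ'j : σ' j = Fin.last m := by simp [hj]
      -- split off the last term on both sides
      rw [← Finset.sum_erase_add _ _ (Finset.mem_univ (Fin.last m)),
        ← Finset.sum_erase_add _ _ (Finset.mem_univ (Fin.last m))]
      have hτl0 : ‖A₀ (Fin.last m) - B₀ (τ (Fin.last m))‖ ^ 2 = 0 := by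
        rw [hτlast]; simp [hA₀, hB₀]
      have hlastterm : ‖A₀ (Fin.last m) - B₀ (σ' (Fin.last m))‖ ^ 2 = ‖B₀ k‖ ^ 2 := by
        rw [← hk]; simp [hA₀]
      have hsum : ∑ i ∈ Finset.univ.erase (Fin.last m), ‖A₀ i - B₀ (τ i)‖ ^ 2 ≤
          ∑ i ∈ Finset.univ.erase (Fin.last m),
            (2 * ‖A₀ i - B₀ (σ' i)‖ ^ 2 + if i = j then 2 * ‖B₀ k‖ ^ 2 else 0) := by
        apply Finset.sum_le_sum
        intro i hi
        have hine : i ≠ Fin.last m := Finset.ne_of_mem_erase hi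
        by_cases hij : i = j
        · have hτi : τ i = k := by
            rw [hτ]
            simp only [Equiv.Perm.mul_apply]
            rw [hij, hσ'j, Equiv.swap_apply_right]
          rw [hτi, if_pos hij]
          have hB0l : B₀ (σ' i) = 0 := by rw [hij, hσ'j]; simp [hB₀]
          rw [hB0l, sub_zero]
          have htri : ‖A₀ i - B₀ k‖ ≤ ‖A₀ i‖ + ‖B₀ k‖ := norm_sub_le _ _
          have h1 : ‖A₀ i - B₀ k‖ ^ 2 ≤ (‖A₀ i‖ + ‖B₀ k‖) ^ 2 := by
            have := mul_self_le_mul_self (norm_nonneg (A₀ i - B₀ k)) htri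
            nlinarith
          nlinarith [sq_nonneg (‖A₀ i‖ - ‖B₀ k‖)]
        · have hσ'i1 : σ' i ≠ Fin.last m := by
            intro he
            exact hij (by rw [hj, ← he]; exact (σ'.symm_apply_apply _).symm)
          have hσ'i2 : σ' i ≠ k := by
            intro he
            exact hine (σ'.injective (he.trans hk))
          have hτi : τ i = σ' i := by
            simp only [hτ, Equiv.Perm.mul_apply]
            exact Equiv.swap_apply_of_ne_of_ne hσ'i2 hσ'i1
          rw [hτi, if_neg hij]
          nlinarith [sq_nonneg ‖A₀ i - B₀ (σ' i)‖]
      have hhsum : ∑ i ∈ Finset.univ.erase (Fin.last m),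
          (if i = j then 2 * ‖B₀ k‖ ^ 2 else 0) ≤ 2 * ‖B₀ k‖ ^ 2 := by
        rw [Finset.sum_ite_eq' (Finset.univ.erase (Fin.last m)) j (fun _ => 2 * ‖B₀ k‖ ^ 2)]
        split_ifs
        · exact le_refl _
        · positivity
      rw [hτl0, add_zero, hlastterm]
      calc ∑ i ∈ Finset.univ.erase (Fin.last m), ‖A₀ i - B₀ (τ i)‖ ^ 2
          ≤ ∑ i ∈ Finset.univ.erase (Fin.last m),
            (2 * ‖A₀ i - B₀ (σ' i)‖ ^ 2 + if i = j then 2 * ‖B₀ k‖ ^ 2 else 0) := hsum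
        _ = (∑ i ∈ Finset.univ.erase (Fin.last m), 2 * ‖A₀ i - B₀ (σ' i)‖ ^ 2) +
            ∑ i ∈ Finset.univ.erase (Fin.last m),
              (if i = j then 2 * ‖B₀ k‖ ^ 2 else 0) := Finset.sum_add_distrib
        _ ≤ (∑ i ∈ Finset.univ.erase (Fin.last m), 2 * ‖A₀ i - B₀ (σ' i)‖ ^ 2) +
            2 * ‖B₀ k‖ ^ 2 := by linarith [hhsum]
        _ = 2 * ((∑ i ∈ Finset.univ.erase (Fin.last m), ‖A₀ i - B₀ (σ' i)‖ ^ 2) + ‖B₀ k‖ ^ 2) := by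
            rw [mul_add, Finset.mul_sum]
    have hle1 : Gdist A B ≤ Real.sqrt (∑ i, ‖A i - B (σ i)‖ ^ 2) := ciInf_le hbdd2 σ
    have heq : (∑ i, ‖A i - B (σ i)‖ ^ 2) = ∑ i, ‖A₀ i - B₀ (τ i)‖ ^ 2 :=
      sum_restrict_eq A B τ hτlast
    calc Gdist A B ≤ Real.sqrt (∑ i, ‖A i - B (σ i)‖ ^ 2) := hle1
      _ = Real.sqrt (∑ i, ‖A₀ i - B₀ (τ i)‖ ^ 2) := by rw [heq]
      _ ≤ Real.sqrt (2 * ∑ i, ‖A₀ i - B₀ (σ' i)‖ ^ 2) := Real.sqrt_le_sqrt hkey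
      _ = Real.sqrt 2 * Real.sqrt (∑ i, ‖A₀ i - B₀ (σ' i)‖ ^ 2) :=
        Real.sqrt_mul (by norm_num) _

/-- Appending the point `0` to two `(Q−1)`-tuples `A`, `B` produces `Q`-tuples `A₀`, `B₀` with
`𝒢(A₀,B₀) ≤ 𝒢(A,B) ≤ √2 · 𝒢(A₀,B₀)`. -/
theorem statement4 {n Q : ℕ} (hn : 1 ≤ n) (hQ : 2 ≤ Q)
    (A B : Fin (Q - 1) → EuclideanSpace ℝ (Fin n)) :
    Gdist (Fin.snoc A 0) (Fin.snoc B 0) ≤ Gdist A B ∧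
      Gdist A B ≤ Real.sqrt 2 * Gdist (Fin.snoc A 0) (Fin.snoc B 0) := by
  exact gdist_aux A B
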